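/- Let A = {a,b,c,d} (4 alternatives) and n = 15 voters, and let P₀ be any profile in which 1 voter reports a≻b≻c≻d, 3 voters report a≻b≻d≻c, 3 voters report b≻d≻c≻a, 4 voters report c≻a≻b≻d, 2 voters report d≻c≻a≻b, and 2 voters report d≻c≻b≻a. If f is a Condorcet extension for 15 voters satisfying half-way monotonicity, then f(P₀) ∈ {c, d}. -/

import Mathlib

/-- The reverse of a linear order: `a` is above `b` in `revOrder L` iff `b` is above `a` in `L`. -/
def revOrder {A : Type*} (L : LinearOrder A) : LinearOrder A :=
  @OrderDual.instLinearOrder A L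

/-- `a` is the (unique) Condorcet winner of the profile `P`: for every other alternative `b`,
the number of voters preferring `a` to `b` (i.e. ranking `b` strictly below `a`) strictly
exceeds the number of voters preferring `b` to `a`. -/
def IsCondorcetWinner {A ι : Type*} (P : ι → LinearOrder A) (a : A) : Prop :=
  ∀ b, b ≠ a → Nat.card {i // (P i).lt a b} < Nat.card {i // (P i).lt b a}

/-- A voting rule is a Condorcet extension if it selects the Condorcet winner whenever one
exists. -/
def CondorcetExtension {A ι : Type*} (f : (ι → LinearOrder A) → A) : Prop :=
  ∀ P a, IsCondorcetWinner P a → f P = a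

/-- Half-way monotonicity: for every profile `P` and voter `i`, the outcome under truthful
voting is weakly preferred (w.r.t. `i`'s true order `P i`) to the outcome when `i` reverses
their preference ranking. -/
def HalfwayMonotone {A ι : Type*} [DecidableEq ι] (f : (ι → LinearOrder A) → A) : Prop :=
  ∀ (P : ι → LinearOrder A) (i : ι),
    (P i).le (f (Function.update P i (revOrder (P i)))) (f P)

/-- Voter with linear order `L` reports the ranking `w ≻ x ≻ y ≻ z`. -/
def Reports4 {A : Type*} (L : LinearOrder A) (w x y z : A) : Prop :=
  L.lt x w ∧ L.lt y x ∧ L.lt z y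

/- ## Auxiliary lemmas -/

lemma revOrder_lt_iff {A : Type*} (L : LinearOrder A) {x y : A} :
    (revOrder L).lt x y ↔ L.lt y x := Iff.rfl

lemma revOrder_le_iff {A : Type*} (L : LinearOrder A) {x y : A} :
    (revOrder L).le x y ↔ L.le y x := Iff.rfl

lemma revOrder_revOrder {A : Type*} (L : LinearOrder A) : revOrder (revOrder L) = L :=
  LinearOrder.ext fun _ _ => Iff.rfl

lemma Llt_asymm {A : Type*} (L : LinearOrder A) {x y : A} (h : L.lt x y) (h' : L.lt y x) :
    False := by
  letI := L; exact lt_asymm h h'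

lemma Llt_trans {A : Type*} (L : LinearOrder A) {x y z : A} (h : L.lt x y) (h' : L.lt y z) :
    L.lt x z := by
  letI := L; exact lt_trans h h'

lemma Llt_trichotomy {A : Type*} (L : LinearOrder A) (x y : A) :
    L.lt x y ∨ x = y ∨ L.lt y x := by
  letI := L; exact lt_trichotomy x y

lemma Llt_not_le {A : Type*} (L : LinearOrder A) {x y : A} (h : L.lt x y) : ¬ L.le y x := by
  letI := L; exact not_le_of_gt h

lemma Reports4.expand {A : Type*} (L : LinearOrder A) {w x y z : A} (h : Reports4 L w x y z) :
    L.lt x w ∧ L.lt y x ∧ L.lt z y ∧ L.lt y w ∧ L.lt z x ∧ L.lt z w :=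
  ⟨h.1, h.2.1, h.2.2, Llt_trans L h.2.1 h.1, Llt_trans L h.2.2 h.2.1,
   Llt_trans L (Llt_trans L h.2.2 h.2.1) h.1⟩

lemma hwm_flip {A ι : Type*} [DecidableEq ι] {f : (ι → LinearOrder A) → A}
    (h : HalfwayMonotone f) (Q : ι → LinearOrder A) (j : ι) :
    (revOrder (Q j)).le (f Q) (f (Function.update Q j (revOrder (Q j)))) := by
  have H := h (Function.update Q j (revOrder (Q j))) j
  simp only [Function.update_self, revOrder_revOrder, Function.update_idem,
    Function.update_eq_self] at H
  rw [Function.update_self] at H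
  exact H

lemma cnt_step_ins {A ι : Type*} [Fintype ι] [DecidableEq ι] (Q : ι → LinearOrder A) (j : ι)
    (L : LinearOrder A) (x y : A) (hL : L.lt x y) (hj : ¬ (Q j).lt x y) :
    {i | (Function.update Q j L i).lt x y}.ncard = {i | (Q i).lt x y}.ncard + 1 := by
  have hset : {i | (Function.update Q j L i).lt x y} = insert j {i | (Q i).lt x y} := by
    ext i
    rcases eq_or_ne i j with rfl | h
    · simp [Function.update_self, hL]; rw [Function.update_self]; exact hL
    · simp [Function.update_of_ne h, h]; rw [Function.update_of_ne h]
  rw [hset]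
  exact Set.ncard_insert_of_notMem (by exact hj) (Set.toFinite _)

lemma cnt_step_del {A ι : Type*} [Fintype ι] [DecidableEq ι] (Q : ι → LinearOrder A) (j : ι)
    (L : LinearOrder A) (x y : A) (hL : ¬ L.lt x y) (hj : (Q j).lt x y) :
    {i | (Q i).lt x y}.ncard = {i | (Function.update Q j L i).lt x y}.ncard + 1 := by
  have hset : {i | (Q i).lt x y} = insert j {i | (Function.update Q j L i).lt x y} := by
    ext i
    rcases eq_or_ne i j with rfl | h
    · simp [hj]
    · simp [Function.update_of_ne h, h]; rw [Function.update_of_ne h]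
  have hnot : j ∉ {i | (Function.update Q j L i).lt x y} := by
    simp [Function.update_self, hL]; rw [Function.update_self]; exact hL
  rw [hset]
  exact Set.ncard_insert_of_notMem hnot (Set.toFinite _)

lemma cnt_compl {A ι : Type*} [Fintype ι] (Q : ι → LinearOrder A) (x y : A) (hxy : x ≠ y) :
    {i | (Q i).lt x y}.ncard + {i | (Q i).lt y x}.ncard = Fintype.card ι := by
  have hd : Disjoint {i | (Q i).lt x y} {i | (Q i).lt y x} :=
    Set.disjoint_left.mpr fun i h h' => (Llt_asymm _ h h').elim
  have hu : {i | (Q i).lt x y} ∪ {i | (Q i).lt y x} = Set.univ := by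
    apply Set.eq_univ_of_forall
    intro i
    rcases Llt_trichotomy (Q i) x y with h | h | h
    · exact Or.inl h
    · exact absurd h hxy
    · exact Or.inr h
  rw [← Set.ncard_union_eq hd (Set.toFinite _) (Set.toFinite _), hu, Set.ncard_univ,
    Nat.card_eq_fintype_card]

lemma cw_criterion {A : Type*} [Fintype A] (Q : Fin 15 → LinearOrder A) (w : A)
    (h : ∀ x : A, x ≠ w → 8 ≤ {i | (Q i).lt x w}.ncard) : IsCondorcetWinner Q w := by
  intro x hx
  have hc := cnt_compl Q w x (fun e => hx e.symm)
  have e1 : Nat.card {i // (Q i).lt w x} = {i | (Q i).lt w x}.ncard :=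
    Nat.card_coe_set_eq _
  have e2 : Nat.card {i // (Q i).lt x w} = {i | (Q i).lt x w}.ncard :=
    Nat.card_coe_set_eq _
  have h8 := h x hx
  simp only [Fintype.card_fin] at hc
  omega

/-- At the 15-voter profile `P₀` of Theorem 3 (odd case), any half-way monotonic
Condorcet extension must choose `c` or `d`. -/
theorem odd_profile_chooses_c_or_d {A : Type*} [Fintype A]
    (a b c d : A)
    (hab : a ≠ b) (hac : a ≠ c) (had : a ≠ d) (hbc : b ≠ c) (hbd : b ≠ d) (hcd : c ≠ d)
    (hall : ∀ x : A, x = a ∨ x = b ∨ x = c ∨ x = d)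
    (P₀ : Fin 15 → LinearOrder A)
    (h1 : Nat.card {i // Reports4 (P₀ i) a b c d} = 1)
    (h2 : Nat.card {i // Reports4 (P₀ i) a b d c} = 3)
    (h3 : Nat.card {i // Reports4 (P₀ i) b d c a} = 3)
    (h4 : Nat.card {i // Reports4 (P₀ i) c a b d} = 4)
    (h5 : Nat.card {i // Reports4 (P₀ i) d c a b} = 2)
    (h6 : Nat.card {i // Reports4 (P₀ i) d c b a} = 2)
    (f : (Fin 15 → LinearOrder A) → A)
    (hf : CondorcetExtension f) (hhwm : HalfwayMonotone f) :
    f P₀ = c ∨ f P₀ = d := by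
  have d12 : Disjoint {i | Reports4 (P₀ i) a b c d} {i | Reports4 (P₀ i) a b d c} := by
    rw [Set.disjoint_left]
    intro i h h'
    exact Llt_asymm _ (Reports4.expand _ h).2.2.1 (Reports4.expand _ h').2.2.1
  have d13 : Disjoint {i | Reports4 (P₀ i) a b c d} {i | Reports4 (P₀ i) b d c a} := by
    rw [Set.disjoint_left]
    intro i h h'
    exact Llt_asymm _ (Reports4.expand _ h).1 (Reports4.expand _ h').2.2.2.2.2
  have d14 : Disjoint {i | Reports4 (P₀ i) a b c d} {i | Reports4 (P₀ i) c a b d} := by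
    rw [Set.disjoint_left]
    intro i h h'
    exact Llt_asymm _ (Reports4.expand _ h).2.2.2.1 (Reports4.expand _ h').1
  have d15 : Disjoint {i | Reports4 (P₀ i) a b c d} {i | Reports4 (P₀ i) d c a b} := by
    rw [Set.disjoint_left]
    intro i h h'
    exact Llt_asymm _ (Reports4.expand _ h).2.2.2.2.2 (Reports4.expand _ h').2.2.2.1
  have d16 : Disjoint {i | Reports4 (P₀ i) a b c d} {i | Reports4 (P₀ i) d c b a} := by
    rw [Set.disjoint_left]
    intro i h h'
    exact Llt_asymm _ (Reports4.expand _ h).1 (Reports4.expand _ h').2.2.1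
  have d23 : Disjoint {i | Reports4 (P₀ i) a b d c} {i | Reports4 (P₀ i) b d c a} := by
    rw [Set.disjoint_left]
    intro i h h'
    exact Llt_asymm _ (Reports4.expand _ h).1 (Reports4.expand _ h').2.2.2.2.2
  have d24 : Disjoint {i | Reports4 (P₀ i) a b d c} {i | Reports4 (P₀ i) c a b d} := by
    rw [Set.disjoint_left]
    intro i h h'
    exact Llt_asymm _ (Reports4.expand _ h).2.2.2.2.2 (Reports4.expand _ h').1
  have d25 : Disjoint {i | Reports4 (P₀ i) a b d c} {i | Reports4 (P₀ i) d c a b} := by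
    rw [Set.disjoint_left]
    intro i h h'
    exact Llt_asymm _ (Reports4.expand _ h).2.2.2.1 (Reports4.expand _ h').2.2.2.1
  have d26 : Disjoint {i | Reports4 (P₀ i) a b d c} {i | Reports4 (P₀ i) d c b a} := by
    rw [Set.disjoint_left]
    intro i h h'
    exact Llt_asymm _ (Reports4.expand _ h).1 (Reports4.expand _ h').2.2.1
  have d34 : Disjoint {i | Reports4 (P₀ i) b d c a} {i | Reports4 (P₀ i) c a b d} := by
    rw [Set.disjoint_left]
    intro i h h'
    exact Llt_asymm _ (Reports4.expand _ h).2.2.2.2.2 (Reports4.expand _ h').2.1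
  have d35 : Disjoint {i | Reports4 (P₀ i) b d c a} {i | Reports4 (P₀ i) d c a b} := by
    rw [Set.disjoint_left]
    intro i h h'
    exact Llt_asymm _ (Reports4.expand _ h).2.2.2.2.2 (Reports4.expand _ h').2.2.1
  have d36 : Disjoint {i | Reports4 (P₀ i) b d c a} {i | Reports4 (P₀ i) d c b a} := by
    rw [Set.disjoint_left]
    intro i h h'
    exact Llt_asymm _ (Reports4.expand _ h).1 (Reports4.expand _ h').2.2.2.1
  have d45 : Disjoint {i | Reports4 (P₀ i) c a b d} {i | Reports4 (P₀ i) d c a b} := by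
    rw [Set.disjoint_left]
    intro i h h'
    exact Llt_asymm _ (Reports4.expand _ h).2.2.2.2.2 (Reports4.expand _ h').1
  have d46 : Disjoint {i | Reports4 (P₀ i) c a b d} {i | Reports4 (P₀ i) d c b a} := by
    rw [Set.disjoint_left]
    intro i h h'
    exact Llt_asymm _ (Reports4.expand _ h).2.2.2.2.2 (Reports4.expand _ h').1
  have d56 : Disjoint {i | Reports4 (P₀ i) d c a b} {i | Reports4 (P₀ i) d c b a} := by
    rw [Set.disjoint_left]
    intro i h h'
    exact Llt_asymm _ (Reports4.expand _ h).2.2.1 (Reports4.expand _ h').2.2.1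
  have c1 : {i | Reports4 (P₀ i) a b c d}.ncard = 1 := by
    rw [← Nat.card_coe_set_eq]; exact h1
  have c2 : {i | Reports4 (P₀ i) a b d c}.ncard = 3 := by
    rw [← Nat.card_coe_set_eq]; exact h2
  have c3 : {i | Reports4 (P₀ i) b d c a}.ncard = 3 := by
    rw [← Nat.card_coe_set_eq]; exact h3
  have c4 : {i | Reports4 (P₀ i) c a b d}.ncard = 4 := by
    rw [← Nat.card_coe_set_eq]; exact h4
  have c5 : {i | Reports4 (P₀ i) d c a b}.ncard = 2 := by
    rw [← Nat.card_coe_set_eq]; exact h5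
  have c6 : {i | Reports4 (P₀ i) d c b a}.ncard = 2 := by
    rw [← Nat.card_coe_set_eq]; exact h6
  -- base count for lt a c
  have bac : {i | (P₀ i).lt a c}.ncard = 11 := by
    have hsub1 : {i | Reports4 (P₀ i) b d c a} ∪ ({i | Reports4 (P₀ i) c a b d} ∪ ({i | Reports4 (P₀ i) d c a b} ∪ {i | Reports4 (P₀ i) d c b a})) ⊆ {i | (P₀ i).lt a c} := by
      intro i hi
      simp only [Set.mem_union] at hi
      rcases hi with h | h | h | h
      · exact (Reports4.expand _ h).2.2.1
      · exact (Reports4.expand _ h).1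
      · exact (Reports4.expand _ h).2.1
      · exact (Reports4.expand _ h).2.2.2.2.1
    have hsub2 : {i | Reports4 (P₀ i) a b c d} ∪ {i | Reports4 (P₀ i) a b d c} ⊆ {i | (P₀ i).lt c a} := by
      intro i hi
      simp only [Set.mem_union] at hi
      rcases hi with h | h
      · exact (Reports4.expand _ h).2.2.2.1
      · exact (Reports4.expand _ h).2.2.2.2.2
    have hcu1 : ({i | Reports4 (P₀ i) b d c a} ∪ ({i | Reports4 (P₀ i) c a b d} ∪ ({i | Reports4 (P₀ i) d c a b} ∪ {i | Reports4 (P₀ i) d c b a}))).ncard = 11 := by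
      rw [Set.ncard_union_eq (Set.disjoint_union_right.mpr ⟨d34, Set.disjoint_union_right.mpr ⟨d35, d36⟩⟩) (Set.toFinite _) (Set.toFinite _), Set.ncard_union_eq (Set.disjoint_union_right.mpr ⟨d45, d46⟩) (Set.toFinite _) (Set.toFinite _), Set.ncard_union_eq (d56) (Set.toFinite _) (Set.toFinite _), c3, c4, c5, c6]
    have hcu2 : ({i | Reports4 (P₀ i) a b c d} ∪ {i | Reports4 (P₀ i) a b d c}).ncard = 4 := by
      rw [Set.ncard_union_eq (d12) (Set.toFinite _) (Set.toFinite _), c1, c2]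
    have l1 := Set.ncard_le_ncard hsub1 (Set.toFinite _)
    have l2 := Set.ncard_le_ncard hsub2 (Set.toFinite _)
    have l3 := cnt_compl P₀ a c hac
    rw [hcu1] at l1
    rw [hcu2] at l2
    simp only [Fintype.card_fin] at l3
    omega
  -- base count for lt b c
  have bbc : {i | (P₀ i).lt b c}.ncard = 8 := by
    have hsub1 : {i | Reports4 (P₀ i) c a b d} ∪ ({i | Reports4 (P₀ i) d c a b} ∪ {i | Reports4 (P₀ i) d c b a}) ⊆ {i | (P₀ i).lt b c} := by
      intro i hi
      simp only [Set.mem_union] at hi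
      rcases hi with h | h | h
      · exact (Reports4.expand _ h).2.2.2.1
      · exact (Reports4.expand _ h).2.2.2.2.1
      · exact (Reports4.expand _ h).2.1
    have hsub2 : {i | Reports4 (P₀ i) a b c d} ∪ ({i | Reports4 (P₀ i) a b d c} ∪ {i | Reports4 (P₀ i) b d c a}) ⊆ {i | (P₀ i).lt c b} := by
      intro i hi
      simp only [Set.mem_union] at hi
      rcases hi with h | h | h
      · exact (Reports4.expand _ h).2.1
      · exact (Reports4.expand _ h).2.2.2.2.1
      · exact (Reports4.expand _ h).2.2.2.1
    have hcu1 : ({i | Reports4 (P₀ i) c a b d} ∪ ({i | Reports4 (P₀ i) d c a b} ∪ {i | Reports4 (P₀ i) d c b a})).ncard = 8 := by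
      rw [Set.ncard_union_eq (Set.disjoint_union_right.mpr ⟨d45, d46⟩) (Set.toFinite _) (Set.toFinite _), Set.ncard_union_eq (d56) (Set.toFinite _) (Set.toFinite _), c4, c5, c6]
    have hcu2 : ({i | Reports4 (P₀ i) a b c d} ∪ ({i | Reports4 (P₀ i) a b d c} ∪ {i | Reports4 (P₀ i) b d c a})).ncard = 7 := by
      rw [Set.ncard_union_eq (Set.disjoint_union_right.mpr ⟨d12, d13⟩) (Set.toFinite _) (Set.toFinite _), Set.ncard_union_eq (d23) (Set.toFinite _) (Set.toFinite _), c1, c2, c3]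
    have l1 := Set.ncard_le_ncard hsub1 (Set.toFinite _)
    have l2 := Set.ncard_le_ncard hsub2 (Set.toFinite _)
    have l3 := cnt_compl P₀ b c hbc
    rw [hcu1] at l1
    rw [hcu2] at l2
    simp only [Fintype.card_fin] at l3
    omega
  -- base count for lt d c
  have bdc : {i | (P₀ i).lt d c}.ncard = 5 := by
    have hsub1 : {i | Reports4 (P₀ i) a b c d} ∪ {i | Reports4 (P₀ i) c a b d} ⊆ {i | (P₀ i).lt d c} := by
      intro i hi
      simp only [Set.mem_union] at hi
      rcases hi with h | h
      · exact (Reports4.expand _ h).2.2.1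
      · exact (Reports4.expand _ h).2.2.2.2.2
    have hsub2 : {i | Reports4 (P₀ i) a b d c} ∪ ({i | Reports4 (P₀ i) b d c a} ∪ ({i | Reports4 (P₀ i) d c a b} ∪ {i | Reports4 (P₀ i) d c b a})) ⊆ {i | (P₀ i).lt c d} := by
      intro i hi
      simp only [Set.mem_union] at hi
      rcases hi with h | h | h | h
      · exact (Reports4.expand _ h).2.2.1
      · exact (Reports4.expand _ h).2.1
      · exact (Reports4.expand _ h).1
      · exact (Reports4.expand _ h).1
    have hcu1 : ({i | Reports4 (P₀ i) a b c d} ∪ {i | Reports4 (P₀ i) c a b d}).ncard = 5 := by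
      rw [Set.ncard_union_eq (d14) (Set.toFinite _) (Set.toFinite _), c1, c4]
    have hcu2 : ({i | Reports4 (P₀ i) a b d c} ∪ ({i | Reports4 (P₀ i) b d c a} ∪ ({i | Reports4 (P₀ i) d c a b} ∪ {i | Reports4 (P₀ i) d c b a}))).ncard = 10 := by
      rw [Set.ncard_union_eq (Set.disjoint_union_right.mpr ⟨d23, Set.disjoint_union_right.mpr ⟨d25, d26⟩⟩) (Set.toFinite _) (Set.toFinite _), Set.ncard_union_eq (Set.disjoint_union_right.mpr ⟨d35, d36⟩) (Set.toFinite _) (Set.toFinite _), Set.ncard_union_eq (d56) (Set.toFinite _) (Set.toFinite _), c2, c3, c5, c6]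
    have l1 := Set.ncard_le_ncard hsub1 (Set.toFinite _)
    have l2 := Set.ncard_le_ncard hsub2 (Set.toFinite _)
    have l3 := cnt_compl P₀ d c hcd.symm
    rw [hcu1] at l1
    rw [hcu2] at l2
    simp only [Fintype.card_fin] at l3
    omega
  -- base count for lt b a
  have bba : {i | (P₀ i).lt b a}.ncard = 10 := by
    have hsub1 : {i | Reports4 (P₀ i) a b c d} ∪ ({i | Reports4 (P₀ i) a b d c} ∪ ({i | Reports4 (P₀ i) c a b d} ∪ {i | Reports4 (P₀ i) d c a b})) ⊆ {i | (P₀ i).lt b a} := by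
      intro i hi
      simp only [Set.mem_union] at hi
      rcases hi with h | h | h | h
      · exact (Reports4.expand _ h).1
      · exact (Reports4.expand _ h).1
      · exact (Reports4.expand _ h).2.1
      · exact (Reports4.expand _ h).2.2.1
    have hsub2 : {i | Reports4 (P₀ i) b d c a} ∪ {i | Reports4 (P₀ i) d c b a} ⊆ {i | (P₀ i).lt a b} := by
      intro i hi
      simp only [Set.mem_union] at hi
      rcases hi with h | h
      · exact (Reports4.expand _ h).2.2.2.2.2
      · exact (Reports4.expand _ h).2.2.1
    have hcu1 : ({i | Reports4 (P₀ i) a b c d} ∪ ({i | Reports4 (P₀ i) a b d c} ∪ ({i | Reports4 (P₀ i) c a b d} ∪ {i | Reports4 (P₀ i) d c a b}))).ncard = 10 := by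
      rw [Set.ncard_union_eq (Set.disjoint_union_right.mpr ⟨d12, Set.disjoint_union_right.mpr ⟨d14, d15⟩⟩) (Set.toFinite _) (Set.toFinite _), Set.ncard_union_eq (Set.disjoint_union_right.mpr ⟨d24, d25⟩) (Set.toFinite _) (Set.toFinite _), Set.ncard_union_eq (d45) (Set.toFinite _) (Set.toFinite _), c1, c2, c4, c5]
    have hcu2 : ({i | Reports4 (P₀ i) b d c a} ∪ {i | Reports4 (P₀ i) d c b a}).ncard = 5 := by
      rw [Set.ncard_union_eq (d36) (Set.toFinite _) (Set.toFinite _), c3, c6]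
    have l1 := Set.ncard_le_ncard hsub1 (Set.toFinite _)
    have l2 := Set.ncard_le_ncard hsub2 (Set.toFinite _)
    have l3 := cnt_compl P₀ b a hab.symm
    rw [hcu1] at l1
    rw [hcu2] at l2
    simp only [Fintype.card_fin] at l3
    omega
  -- base count for lt c a
  have bca : {i | (P₀ i).lt c a}.ncard = 4 := by
    have hsub1 : {i | Reports4 (P₀ i) a b c d} ∪ {i | Reports4 (P₀ i) a b d c} ⊆ {i | (P₀ i).lt c a} := by
      intro i hi
      simp only [Set.mem_union] at hi
      rcases hi with h | h
      · exact (Reports4.expand _ h).2.2.2.1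
      · exact (Reports4.expand _ h).2.2.2.2.2
    have hsub2 : {i | Reports4 (P₀ i) b d c a} ∪ ({i | Reports4 (P₀ i) c a b d} ∪ ({i | Reports4 (P₀ i) d c a b} ∪ {i | Reports4 (P₀ i) d c b a})) ⊆ {i | (P₀ i).lt a c} := by
      intro i hi
      simp only [Set.mem_union] at hi
      rcases hi with h | h | h | h
      · exact (Reports4.expand _ h).2.2.1
      · exact (Reports4.expand _ h).1
      · exact (Reports4.expand _ h).2.1
      · exact (Reports4.expand _ h).2.2.2.2.1
    have hcu1 : ({i | Reports4 (P₀ i) a b c d} ∪ {i | Reports4 (P₀ i) a b d c}).ncard = 4 := by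
      rw [Set.ncard_union_eq (d12) (Set.toFinite _) (Set.toFinite _), c1, c2]
    have hcu2 : ({i | Reports4 (P₀ i) b d c a} ∪ ({i | Reports4 (P₀ i) c a b d} ∪ ({i | Reports4 (P₀ i) d c a b} ∪ {i | Reports4 (P₀ i) d c b a}))).ncard = 11 := by
      rw [Set.ncard_union_eq (Set.disjoint_union_right.mpr ⟨d34, Set.disjoint_union_right.mpr ⟨d35, d36⟩⟩) (Set.toFinite _) (Set.toFinite _), Set.ncard_union_eq (Set.disjoint_union_right.mpr ⟨d45, d46⟩) (Set.toFinite _) (Set.toFinite _), Set.ncard_union_eq (d56) (Set.toFinite _) (Set.toFinite _), c3, c4, c5, c6]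
    have l1 := Set.ncard_le_ncard hsub1 (Set.toFinite _)
    have l2 := Set.ncard_le_ncard hsub2 (Set.toFinite _)
    have l3 := cnt_compl P₀ c a hac.symm
    rw [hcu1] at l1
    rw [hcu2] at l2
    simp only [Fintype.card_fin] at l3
    omega
  -- base count for lt d a
  have bda : {i | (P₀ i).lt d a}.ncard = 8 := by
    have hsub1 : {i | Reports4 (P₀ i) a b c d} ∪ ({i | Reports4 (P₀ i) a b d c} ∪ {i | Reports4 (P₀ i) c a b d}) ⊆ {i | (P₀ i).lt d a} := by
      intro i hi
      simp only [Set.mem_union] at hi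
      rcases hi with h | h | h
      · exact (Reports4.expand _ h).2.2.2.2.2
      · exact (Reports4.expand _ h).2.2.2.1
      · exact (Reports4.expand _ h).2.2.2.2.1
    have hsub2 : {i | Reports4 (P₀ i) b d c a} ∪ ({i | Reports4 (P₀ i) d c a b} ∪ {i | Reports4 (P₀ i) d c b a}) ⊆ {i | (P₀ i).lt a d} := by
      intro i hi
      simp only [Set.mem_union] at hi
      rcases hi with h | h | h
      · exact (Reports4.expand _ h).2.2.2.2.1
      · exact (Reports4.expand _ h).2.2.2.1
      · exact (Reports4.expand _ h).2.2.2.2.2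
    have hcu1 : ({i | Reports4 (P₀ i) a b c d} ∪ ({i | Reports4 (P₀ i) a b d c} ∪ {i | Reports4 (P₀ i) c a b d})).ncard = 8 := by
      rw [Set.ncard_union_eq (Set.disjoint_union_right.mpr ⟨d12, d14⟩) (Set.toFinite _) (Set.toFinite _), Set.ncard_union_eq (d24) (Set.toFinite _) (Set.toFinite _), c1, c2, c4]
    have hcu2 : ({i | Reports4 (P₀ i) b d c a} ∪ ({i | Reports4 (P₀ i) d c a b} ∪ {i | Reports4 (P₀ i) d c b a})).ncard = 7 := by
      rw [Set.ncard_union_eq (Set.disjoint_union_right.mpr ⟨d35, d36⟩) (Set.toFinite _) (Set.toFinite _), Set.ncard_union_eq (d56) (Set.toFinite _) (Set.toFinite _), c3, c5, c6]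
    have l1 := Set.ncard_le_ncard hsub1 (Set.toFinite _)
    have l2 := Set.ncard_le_ncard hsub2 (Set.toFinite _)
    have l3 := cnt_compl P₀ d a had.symm
    rw [hcu1] at l1
    rw [hcu2] at l2
    simp only [Fintype.card_fin] at l3
    omega
  -- choose the voters to be manipulated
  have nemem : ∀ {s t : Set (Fin 15)}, Disjoint s t → ∀ {u v : Fin 15},
      u ∈ s → v ∈ t → u ≠ v :=
    by intro s t hd u v hu hv he; exact (Set.disjoint_left.mp hd hu) (he ▸ hv)
  obtain ⟨i1, hi1⟩ : {i | Reports4 (P₀ i) d c b a}.Nonempty :=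
    Set.nonempty_of_ncard_ne_zero (by rw [c6]; omega)
  obtain ⟨i2, hi2⟩ : {i | Reports4 (P₀ i) b d c a}.Nonempty :=
    Set.nonempty_of_ncard_ne_zero (by rw [c3]; omega)
  have hd3 : ({i | Reports4 (P₀ i) b d c a} \ {i2}).ncard = 2 := by
    rw [Set.ncard_diff_singleton_of_mem hi2, c3]
  obtain ⟨i3, hi3'⟩ : ({i | Reports4 (P₀ i) b d c a} \ {i2}).Nonempty :=
    Set.nonempty_of_ncard_ne_zero (by rw [hd3]; omega)
  have hi3 : i3 ∈ {i | Reports4 (P₀ i) b d c a} := hi3'.1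
  have ne32 : i3 ≠ i2 := by have := hi3'.2; simpa using this
  obtain ⟨i4, hi4⟩ : {i | Reports4 (P₀ i) d c a b}.Nonempty :=
    Set.nonempty_of_ncard_ne_zero (by rw [c5]; omega)
  obtain ⟨i5, hi5⟩ : {i | Reports4 (P₀ i) c a b d}.Nonempty :=
    Set.nonempty_of_ncard_ne_zero (by rw [c4]; omega)
  have hd4 : ({i | Reports4 (P₀ i) c a b d} \ {i5}).ncard = 3 := by
    rw [Set.ncard_diff_singleton_of_mem hi5, c4]
  obtain ⟨i6, hi6'⟩ : ({i | Reports4 (P₀ i) c a b d} \ {i5}).Nonempty :=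
    Set.nonempty_of_ncard_ne_zero (by rw [hd4]; omega)
  have hi6 : i6 ∈ {i | Reports4 (P₀ i) c a b d} := hi6'.1
  have ne65 : i6 ≠ i5 := by have := hi6'.2; simpa using this
  have ne21 : i2 ≠ i1 := nemem d36 hi2 hi1
  have ne31 : i3 ≠ i1 := nemem d36 hi3 hi1
  have ne41 : i4 ≠ i1 := nemem d56 hi4 hi1
  have ne54 : i5 ≠ i4 := nemem d45 hi5 hi4
  have ne51 : i5 ≠ i1 := nemem d46 hi5 hi1
  have ne64 : i6 ≠ i4 := nemem d45 hi6 hi4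
  have ne61 : i6 ≠ i1 := nemem d46 hi6 hi1
  -- the lt-facts of the chosen voters
  have r1 : Reports4 (P₀ i1) d c b a := hi1
  have r2 : Reports4 (P₀ i2) b d c a := hi2
  have r3 : Reports4 (P₀ i3) b d c a := hi3
  have r4 : Reports4 (P₀ i4) d c a b := hi4
  have r5 : Reports4 (P₀ i5) c a b d := hi5
  have r6 : Reports4 (P₀ i6) c a b d := hi6
  have E1 := Reports4.expand _ r1
  have E2 := Reports4.expand _ r2
  have E3 := Reports4.expand _ r3
  have E4 := Reports4.expand _ r4
  have E5 := Reports4.expand _ r5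
  have E6 := Reports4.expand _ r6
  -- the manipulated profiles
  set Q : Fin 15 → LinearOrder A := Function.update P₀ i1 (revOrder (P₀ i1)) with hQ
  set Q2 : Fin 15 → LinearOrder A := Function.update Q i2 (revOrder (P₀ i2)) with hQ2
  set Q3 : Fin 15 → LinearOrder A := Function.update Q2 i3 (revOrder (P₀ i3)) with hQ3
  set R1 : Fin 15 → LinearOrder A := Function.update Q i4 (revOrder (P₀ i4)) with hR1
  set R2 : Fin 15 → LinearOrder A := Function.update R1 i5 (revOrder (P₀ i5)) with hR2
  set R3 : Fin 15 → LinearOrder A := Function.update R2 i6 (revOrder (P₀ i6)) with hR3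
  have eQ2 : Q i2 = P₀ i2 := by rw [hQ, Function.update_of_ne ne21]
  have eQ23 : Q2 i3 = P₀ i3 := by
    rw [hQ2, Function.update_of_ne ne32, hQ, Function.update_of_ne ne31]
  have eQ4 : Q i4 = P₀ i4 := by rw [hQ, Function.update_of_ne ne41]
  have eR15 : R1 i5 = P₀ i5 := by
    rw [hR1, Function.update_of_ne ne54, hQ, Function.update_of_ne ne51]
  have eR26 : R2 i6 = P₀ i6 := by
    rw [hR2, Function.update_of_ne ne65, hR1, Function.update_of_ne ne64, hQ,
      Function.update_of_ne ne61]
  -- the half-way monotonicity steps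
  have step1 : (revOrder (P₀ i1)).le (f P₀) (f Q) := by
    rw [hQ]; exact hwm_flip hhwm P₀ i1
  have step2 : (revOrder (P₀ i2)).le (f Q) (f Q2) := by
    have H := hwm_flip hhwm Q i2
    rw [eQ2] at H
    rw [← hQ2] at H
    exact H
  have step3 : (revOrder (P₀ i3)).le (f Q2) (f Q3) := by
    have H := hwm_flip hhwm Q2 i3
    rw [eQ23] at H
    rw [← hQ3] at H
    exact H
  have step4 : (revOrder (P₀ i4)).le (f Q) (f R1) := by
    have H := hwm_flip hhwm Q i4
    rw [eQ4] at H
    rw [← hR1] at H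
    exact H
  have step5 : (revOrder (P₀ i5)).le (f R1) (f R2) := by
    have H := hwm_flip hhwm R1 i5
    rw [eR15] at H
    rw [← hR2] at H
    exact H
  have step6 : (revOrder (P₀ i6)).le (f R2) (f R3) := by
    have H := hwm_flip hhwm R2 i6
    rw [eR26] at H
    rw [← hR3] at H
    exact H
  have uac1 : {i | (P₀ i).lt a c}.ncard = {i | (Q i).lt a c}.ncard + 1 := by
    rw [hQ]
    exact cnt_step_del P₀ i1 _ a c (fun hh => Llt_asymm _ ((revOrder_lt_iff _).mp hh) E1.2.2.2.2.1) E1.2.2.2.2.1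
  have uac2 : {i | (Q i).lt a c}.ncard = {i | (Q2 i).lt a c}.ncard + 1 := by
    rw [hQ2]
    refine cnt_step_del Q i2 _ a c (fun hh => Llt_asymm _ ((revOrder_lt_iff _).mp hh) E2.2.2.1) ?_
    rw [eQ2]
    exact E2.2.2.1
  have uac3 : {i | (Q2 i).lt a c}.ncard = {i | (Q3 i).lt a c}.ncard + 1 := by
    rw [hQ3]
    refine cnt_step_del Q2 i3 _ a c (fun hh => Llt_asymm _ ((revOrder_lt_iff _).mp hh) E3.2.2.1) ?_
    rw [eQ23]
    exact E3.2.2.1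
  have finac : {i | (Q3 i).lt a c}.ncard = 8 := by
    omega
  have ubc1 : {i | (P₀ i).lt b c}.ncard = {i | (Q i).lt b c}.ncard + 1 := by
    rw [hQ]
    exact cnt_step_del P₀ i1 _ b c (fun hh => Llt_asymm _ ((revOrder_lt_iff _).mp hh) E1.2.1) E1.2.1
  have ubc2 : {i | (Q2 i).lt b c}.ncard = {i | (Q i).lt b c}.ncard + 1 := by
    rw [hQ2]
    refine cnt_step_ins Q i2 _ b c ((revOrder_lt_iff _).mpr E2.2.2.2.1) ?_
    rw [eQ2]
    exact fun hh => Llt_asymm _ hh E2.2.2.2.1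
  have ubc3 : {i | (Q3 i).lt b c}.ncard = {i | (Q2 i).lt b c}.ncard + 1 := by
    rw [hQ3]
    refine cnt_step_ins Q2 i3 _ b c ((revOrder_lt_iff _).mpr E3.2.2.2.1) ?_
    rw [eQ23]
    exact fun hh => Llt_asymm _ hh E3.2.2.2.1
  have finbc : {i | (Q3 i).lt b c}.ncard = 9 := by
    omega
  have udc1 : {i | (Q i).lt d c}.ncard = {i | (P₀ i).lt d c}.ncard + 1 := by
    rw [hQ]
    exact cnt_step_ins P₀ i1 _ d c ((revOrder_lt_iff _).mpr E1.1) (fun hh => Llt_asymm _ hh E1.1)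
  have udc2 : {i | (Q2 i).lt d c}.ncard = {i | (Q i).lt d c}.ncard + 1 := by
    rw [hQ2]
    refine cnt_step_ins Q i2 _ d c ((revOrder_lt_iff _).mpr E2.2.1) ?_
    rw [eQ2]
    exact fun hh => Llt_asymm _ hh E2.2.1
  have udc3 : {i | (Q3 i).lt d c}.ncard = {i | (Q2 i).lt d c}.ncard + 1 := by
    rw [hQ3]
    refine cnt_step_ins Q2 i3 _ d c ((revOrder_lt_iff _).mpr E3.2.1) ?_
    rw [eQ23]
    exact fun hh => Llt_asymm _ hh E3.2.1
  have findc : {i | (Q3 i).lt d c}.ncard = 8 := by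
    omega
  have uba1 : {i | (Q i).lt b a}.ncard = {i | (P₀ i).lt b a}.ncard + 1 := by
    rw [hQ]
    exact cnt_step_ins P₀ i1 _ b a ((revOrder_lt_iff _).mpr E1.2.2.1) (fun hh => Llt_asymm _ hh E1.2.2.1)
  have uba2 : {i | (Q i).lt b a}.ncard = {i | (R1 i).lt b a}.ncard + 1 := by
    rw [hR1]
    refine cnt_step_del Q i4 _ b a (fun hh => Llt_asymm _ ((revOrder_lt_iff _).mp hh) E4.2.2.1) ?_
    rw [eQ4]
    exact E4.2.2.1
  have uba3 : {i | (R1 i).lt b a}.ncard = {i | (R2 i).lt b a}.ncard + 1 := by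
    rw [hR2]
    refine cnt_step_del R1 i5 _ b a (fun hh => Llt_asymm _ ((revOrder_lt_iff _).mp hh) E5.2.1) ?_
    rw [eR15]
    exact E5.2.1
  have uba4 : {i | (R2 i).lt b a}.ncard = {i | (R3 i).lt b a}.ncard + 1 := by
    rw [hR3]
    refine cnt_step_del R2 i6 _ b a (fun hh => Llt_asymm _ ((revOrder_lt_iff _).mp hh) E6.2.1) ?_
    rw [eR26]
    exact E6.2.1
  have finba : {i | (R3 i).lt b a}.ncard = 8 := by
    omega
  have uca1 : {i | (Q i).lt c a}.ncard = {i | (P₀ i).lt c a}.ncard + 1 := by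
    rw [hQ]
    exact cnt_step_ins P₀ i1 _ c a ((revOrder_lt_iff _).mpr E1.2.2.2.2.1) (fun hh => Llt_asymm _ hh E1.2.2.2.2.1)
  have uca2 : {i | (R1 i).lt c a}.ncard = {i | (Q i).lt c a}.ncard + 1 := by
    rw [hR1]
    refine cnt_step_ins Q i4 _ c a ((revOrder_lt_iff _).mpr E4.2.1) ?_
    rw [eQ4]
    exact fun hh => Llt_asymm _ hh E4.2.1
  have uca3 : {i | (R2 i).lt c a}.ncard = {i | (R1 i).lt c a}.ncard + 1 := by
    rw [hR2]
    refine cnt_step_ins R1 i5 _ c a ((revOrder_lt_iff _).mpr E5.1) ?_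
    rw [eR15]
    exact fun hh => Llt_asymm _ hh E5.1
  have uca4 : {i | (R3 i).lt c a}.ncard = {i | (R2 i).lt c a}.ncard + 1 := by
    rw [hR3]
    refine cnt_step_ins R2 i6 _ c a ((revOrder_lt_iff _).mpr E6.1) ?_
    rw [eR26]
    exact fun hh => Llt_asymm _ hh E6.1
  have finca : {i | (R3 i).lt c a}.ncard = 8 := by
    omega
  have uda1 : {i | (Q i).lt d a}.ncard = {i | (P₀ i).lt d a}.ncard + 1 := by
    rw [hQ]
    exact cnt_step_ins P₀ i1 _ d a ((revOrder_lt_iff _).mpr E1.2.2.2.2.2) (fun hh => Llt_asymm _ hh E1.2.2.2.2.2)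
  have uda2 : {i | (R1 i).lt d a}.ncard = {i | (Q i).lt d a}.ncard + 1 := by
    rw [hR1]
    refine cnt_step_ins Q i4 _ d a ((revOrder_lt_iff _).mpr E4.2.2.2.1) ?_
    rw [eQ4]
    exact fun hh => Llt_asymm _ hh E4.2.2.2.1
  have uda3 : {i | (R1 i).lt d a}.ncard = {i | (R2 i).lt d a}.ncard + 1 := by
    rw [hR2]
    refine cnt_step_del R1 i5 _ d a (fun hh => Llt_asymm _ ((revOrder_lt_iff _).mp hh) E5.2.2.2.2.1) ?_
    rw [eR15]
    exact E5.2.2.2.2.1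
  have uda4 : {i | (R2 i).lt d a}.ncard = {i | (R3 i).lt d a}.ncard + 1 := by
    rw [hR3]
    refine cnt_step_del R2 i6 _ d a (fun hh => Llt_asymm _ ((revOrder_lt_iff _).mp hh) E6.2.2.2.2.1) ?_
    rw [eR26]
    exact E6.2.2.2.2.1
  have finda : {i | (R3 i).lt d a}.ncard = 8 := by
    omega
  -- the two Condorcet winner facts
  have cwQ3 : IsCondorcetWinner Q3 c := by
    apply cw_criterion
    intro x hx
    rcases hall x with rfl | rfl | rfl | rfl
    · rw [finac]
    · rw [finbc]; omega
    · exact absurd rfl hx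
    · rw [findc]
  have cwR3 : IsCondorcetWinner R3 a := by
    apply cw_criterion
    intro x hx
    rcases hall x with rfl | rfl | rfl | rfl
    · exact absurd rfl hx
    · rw [finba]
    · rw [finca]
    · rw [finda]
  have hfQ3 : f Q3 = c := hf Q3 c cwQ3
  have hfR3 : f R3 = a := hf R3 a cwR3
  -- chase the half-way monotonicity chain
  have hQa : f Q ≠ a := by
    intro h
    have s2 : (P₀ i2).le (f Q2) a := by
      have H := step2; rw [h] at H; exact (revOrder_le_iff _).mp H
    have s3 : (P₀ i3).le c (f Q2) := by
      have H := step3; rw [hfQ3] at H; exact (revOrder_le_iff _).mp H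
    rcases hall (f Q2) with h2 | h2 | h2 | h2
    · rw [h2] at s3; exact Llt_not_le _ E3.2.2.1 s3
    · rw [h2] at s2; exact Llt_not_le _ E2.2.2.2.2.2 s2
    · rw [h2] at s2; exact Llt_not_le _ E2.2.2.1 s2
    · rw [h2] at s2; exact Llt_not_le _ E2.2.2.2.2.1 s2
  have hQb : f Q ≠ b := by
    intro h
    have s6 : (P₀ i6).le a (f R2) := by
      have H := step6; rw [hfR3] at H; exact (revOrder_le_iff _).mp H
    have s5 : (P₀ i5).le (f R2) (f R1) := (revOrder_le_iff _).mp step5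
    have s4 : (P₀ i4).le (f R1) b := by
      have H := step4; rw [h] at H; exact (revOrder_le_iff _).mp H
    have hR2' : f R2 = a ∨ f R2 = c := by
      rcases hall (f R2) with h2 | h2 | h2 | h2
      · exact Or.inl h2
      · rw [h2] at s6; exact absurd s6 (Llt_not_le _ E6.2.1)
      · exact Or.inr h2
      · rw [h2] at s6; exact absurd s6 (Llt_not_le _ E6.2.2.2.2.1)
    have hR1' : f R1 = a ∨ f R1 = c := by
      rcases hall (f R1) with h1 | h1 | h1 | h1
      · exact Or.inl h1
      · rw [h1] at s5
        rcases hR2' with h2 | h2 <;> rw [h2] at s5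
        · exact absurd s5 (Llt_not_le _ E5.2.1)
        · exact absurd s5 (Llt_not_le _ E5.2.2.2.1)
      · exact Or.inr h1
      · rw [h1] at s5
        rcases hR2' with h2 | h2 <;> rw [h2] at s5
        · exact absurd s5 (Llt_not_le _ E5.2.2.2.2.1)
        · exact absurd s5 (Llt_not_le _ E5.2.2.2.2.2)
    rcases hR1' with h1 | h1 <;> rw [h1] at s4
    · exact Llt_not_le _ E4.2.2.1 s4
    · exact Llt_not_le _ E4.2.2.2.2.1 s4
  have s1 : (P₀ i1).le (f Q) (f P₀) := (revOrder_le_iff _).mp step1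
  rcases hall (f Q) with hq | hq | hq | hq
  · exact absurd hq hQa
  · exact absurd hq hQb
  · rw [hq] at s1
    rcases hall (f P₀) with hp | hp | hp | hp
    · rw [hp] at s1; exact absurd s1 (Llt_not_le _ E1.2.2.2.2.1)
    · rw [hp] at s1; exact absurd s1 (Llt_not_le _ E1.2.1)
    · exact Or.inl hp
    · exact Or.inr hp
  · rw [hq] at s1
    rcases hall (f P₀) with hp | hp | hp | hp
    · rw [hp] at s1; exact absurd s1 (Llt_not_le _ E1.2.2.2.2.2)
    · rw [hp] at s1; exact absurd s1 (Llt_not_le _ E1.2.2.2.1)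
    · rw [hp] at s1; exact absurd s1 (Llt_not_le _ E1.1)
    · exact Or.inr hp
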